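/- Let B₂ = {|0⟩, |1⟩} be the standard basis of ℂ², B₀ = {(|0⟩+|1⟩)/√2, (|0⟩−|1⟩)/√2}, B₁ = {(|0⟩+i|1⟩)/√2, (|0⟩−i|1⟩)/√2}, and let P₂ be the two-qubit control-phase, the diagonal unitary on ℂ² ⊗ ℂ² with P₂(|s⟩⊗|t⟩) = (−1)^{st}|s⟩⊗|t⟩. Then the five orthonormal bases of EuclideanSpace ℂ (Fin 2 × Fin 2) given by {B₂ ⊗ B₂}, {B₀ ⊗ B₀}, {B₁ ⊗ B₁}, {P₂(u ⊗ v) : u ∈ B₀, v ∈ B₁}, and {P₂(u ⊗ v) : u ∈ B₁, v ∈ B₀} are pairwise mutually unbiased, i.e. form a complete set of 5 MUBs in dimension 4. -/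

import Mathlib

/-- The standard qubit basis `B₂`. -/
noncomputable def qbStd (j : Fin 2) : EuclideanSpace ℂ (Fin 2) :=
  EuclideanSpace.single j 1

/-- The qubit basis `B₀ = {(|0⟩+|1⟩)/√2, (|0⟩−|1⟩)/√2}`. -/
noncomputable def qbX (j : Fin 2) : EuclideanSpace ℂ (Fin 2) :=
  WithLp.toLp 2 (fun s => (Real.sqrt 2 : ℂ)⁻¹ * (-1 : ℂ) ^ ((j : ℕ) * (s : ℕ)))

/-- The qubit basis `B₁ = {(|0⟩+i|1⟩)/√2, (|0⟩−i|1⟩)/√2}`. -/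
noncomputable def qbY (j : Fin 2) : EuclideanSpace ℂ (Fin 2) :=
  WithLp.toLp 2 (fun s => (Real.sqrt 2 : ℂ)⁻¹ * Complex.I ^ (s : ℕ) * (-1 : ℂ) ^ ((j : ℕ) * (s : ℕ)))

/-- The product vector `(u ⊗ v)(a,b) = u(a)·v(b)`. -/
noncomputable def tens (u v : EuclideanSpace ℂ (Fin 2)) :
    EuclideanSpace ℂ (Fin 2 × Fin 2) :=
  WithLp.toLp 2 (fun ab => u ab.1 * v ab.2)

/-- The two-qubit control-phase, `P₂(|s⟩⊗|t⟩) = (−1)^{st}|s⟩⊗|t⟩` (a diagonal unitary). -/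
noncomputable def cphase2 (ψ : EuclideanSpace ℂ (Fin 2 × Fin 2)) :
    EuclideanSpace ℂ (Fin 2 × Fin 2) :=
  WithLp.toLp 2 (fun st => (-1 : ℂ) ^ ((st.1 : ℕ) * (st.2 : ℕ)) * ψ st)

/-- The five candidate bases `B₂⊗B₂`, `B₀⊗B₀`, `B₁⊗B₁`, `P₂(B₀⊗B₁)`, `P₂(B₁⊗B₀)`. -/
noncomputable def mub4 : Fin 5 → (Fin 2 × Fin 2) → EuclideanSpace ℂ (Fin 2 × Fin 2) :=
  ![fun ij => tens (qbStd ij.1) (qbStd ij.2),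
    fun ij => tens (qbX ij.1) (qbX ij.2),
    fun ij => tens (qbY ij.1) (qbY ij.2),
    fun ij => cphase2 (tens (qbX ij.1) (qbY ij.2)),
    fun ij => cphase2 (tens (qbY ij.1) (qbX ij.2))]



set_option maxHeartbeats 1000000

private lemma inner4 (x y : EuclideanSpace ℂ (Fin 2 × Fin 2)) :
    (inner ℂ x y : ℂ) = (starRingEnd ℂ) (x (0,0)) * y (0,0) + (starRingEnd ℂ) (x (0,1)) * y (0,1)
      + (starRingEnd ℂ) (x (1,0)) * y (1,0) + (starRingEnd ℂ) (x (1,1)) * y (1,1) := by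
  simp [PiLp.inner_apply, Fintype.sum_prod_type, Fin.sum_univ_two]; ring

private lemma hrmul : (Real.sqrt 2)⁻¹ * (Real.sqrt 2)⁻¹ = 2⁻¹ := by
  rw [← mul_inv, Real.mul_self_sqrt (by norm_num)]

private lemma hrp2 : (Real.sqrt 2) ^ 2 = 2 := Real.sq_sqrt (by norm_num)

private lemma hrp4 : (Real.sqrt 2) ^ 4 = 4 := by
  rw [show (4:ℕ) = 2*2 by rfl, pow_mul, hrp2]; norm_num

private lemma hrp8 : (Real.sqrt 2) ^ 8 = 16 := by
  rw [show (8:ℕ) = 2*4 by rfl, pow_mul, hrp2]; norm_num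

private lemma hcmul : ((Real.sqrt 2 : ℝ) : ℂ)⁻¹ * ((Real.sqrt 2 : ℝ) : ℂ)⁻¹ = 2⁻¹ := by
  rw [← Complex.ofReal_inv, ← Complex.ofReal_mul, hrmul]; norm_num

private lemma absinner_symm (x y : EuclideanSpace ℂ (Fin 2 × Fin 2)) :
    ‖(inner ℂ x y : ℂ)‖ = ‖(inner ℂ y x : ℂ)‖ := by
  rw [← inner_conj_symm, Complex.norm_conj]


private lemma ortho0 : Orthonormal ℂ (mub4 0) := by
  rw [orthonormal_iff_ite]
  intro v w
  fin_cases v <;> fin_cases w <;>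
    rw [inner4] <;>
    simp [mub4, tens, qbStd, qbX, qbY, cphase2, EuclideanSpace.single_apply,
      ← Complex.ofReal_inv, Prod.ext_iff] <;>
    ring_nf <;>
    norm_num [hcmul, Prod.ext_iff, ← Complex.ofReal_pow, hrp2, hrp4, hrp8,
      Complex.ext_iff]


private lemma ortho1 : Orthonormal ℂ (mub4 1) := by
  rw [orthonormal_iff_ite]
  intro v w
  fin_cases v <;> fin_cases w <;>
    rw [inner4] <;>
    simp [mub4, tens, qbStd, qbX, qbY, cphase2, EuclideanSpace.single_apply,
      ← Complex.ofReal_inv, Prod.ext_iff] <;>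
    ring_nf <;>
    norm_num [hcmul, Prod.ext_iff, ← Complex.ofReal_pow, hrp2, hrp4, hrp8,
      Complex.ext_iff]


private lemma ortho2 : Orthonormal ℂ (mub4 2) := by
  rw [orthonormal_iff_ite]
  intro v w
  fin_cases v <;> fin_cases w <;>
    rw [inner4] <;>
    simp [mub4, tens, qbStd, qbX, qbY, cphase2, EuclideanSpace.single_apply,
      ← Complex.ofReal_inv, Prod.ext_iff] <;>
    ring_nf <;>
    norm_num [hcmul, Prod.ext_iff, ← Complex.ofReal_pow, hrp2, hrp4, hrp8,
      Complex.ext_iff]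


private lemma ortho3 : Orthonormal ℂ (mub4 3) := by
  rw [orthonormal_iff_ite]
  intro v w
  fin_cases v <;> fin_cases w <;>
    rw [inner4] <;>
    simp [mub4, tens, qbStd, qbX, qbY, cphase2, EuclideanSpace.single_apply,
      ← Complex.ofReal_inv, Prod.ext_iff] <;>
    ring_nf <;>
    norm_num [hcmul, Prod.ext_iff, ← Complex.ofReal_pow, hrp2, hrp4, hrp8,
      Complex.ext_iff]


private lemma ortho4 : Orthonormal ℂ (mub4 4) := by
  rw [orthonormal_iff_ite]
  intro v w
  fin_cases v <;> fin_cases w <;>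
    rw [inner4] <;>
    simp [mub4, tens, qbStd, qbX, qbY, cphase2, EuclideanSpace.single_apply,
      ← Complex.ofReal_inv, Prod.ext_iff] <;>
    ring_nf <;>
    norm_num [hcmul, Prod.ext_iff, ← Complex.ofReal_pow, hrp2, hrp4, hrp8,
      Complex.ext_iff]


private lemma ub01 (v w : Fin 2 × Fin 2) :
    ‖(inner ℂ (mub4 0 v) (mub4 1 w) : ℂ)‖ ^ 2 = 1 / 4 := by
  fin_cases v <;> fin_cases w <;>
    rw [Complex.sq_norm, inner4] <;>
    simp [mub4, tens, qbStd, qbX, qbY, cphase2, EuclideanSpace.single_apply,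
      ← Complex.ofReal_inv, Complex.normSq_apply] <;>
    ring_nf <;>
    norm_num [hrmul, hrp2, hrp4, hrp8]


private lemma ub02 (v w : Fin 2 × Fin 2) :
    ‖(inner ℂ (mub4 0 v) (mub4 2 w) : ℂ)‖ ^ 2 = 1 / 4 := by
  fin_cases v <;> fin_cases w <;>
    rw [Complex.sq_norm, inner4] <;>
    simp [mub4, tens, qbStd, qbX, qbY, cphase2, EuclideanSpace.single_apply,
      ← Complex.ofReal_inv, Complex.normSq_apply] <;>
    ring_nf <;>
    norm_num [hrmul, hrp2, hrp4, hrp8]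


private lemma ub03 (v w : Fin 2 × Fin 2) :
    ‖(inner ℂ (mub4 0 v) (mub4 3 w) : ℂ)‖ ^ 2 = 1 / 4 := by
  fin_cases v <;> fin_cases w <;>
    rw [Complex.sq_norm, inner4] <;>
    simp [mub4, tens, qbStd, qbX, qbY, cphase2, EuclideanSpace.single_apply,
      ← Complex.ofReal_inv, Complex.normSq_apply] <;>
    ring_nf <;>
    norm_num [hrmul, hrp2, hrp4, hrp8]


private lemma ub04 (v w : Fin 2 × Fin 2) :
    ‖(inner ℂ (mub4 0 v) (mub4 4 w) : ℂ)‖ ^ 2 = 1 / 4 := by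
  fin_cases v <;> fin_cases w <;>
    rw [Complex.sq_norm, inner4] <;>
    simp [mub4, tens, qbStd, qbX, qbY, cphase2, EuclideanSpace.single_apply,
      ← Complex.ofReal_inv, Complex.normSq_apply] <;>
    ring_nf <;>
    norm_num [hrmul, hrp2, hrp4, hrp8]


private lemma ub12 (v w : Fin 2 × Fin 2) :
    ‖(inner ℂ (mub4 1 v) (mub4 2 w) : ℂ)‖ ^ 2 = 1 / 4 := by
  fin_cases v <;> fin_cases w <;>
    rw [Complex.sq_norm, inner4] <;>
    simp [mub4, tens, qbStd, qbX, qbY, cphase2, EuclideanSpace.single_apply,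
      ← Complex.ofReal_inv, Complex.normSq_apply] <;>
    ring_nf <;>
    norm_num [hrmul, hrp2, hrp4, hrp8]


private lemma ub13 (v w : Fin 2 × Fin 2) :
    ‖(inner ℂ (mub4 1 v) (mub4 3 w) : ℂ)‖ ^ 2 = 1 / 4 := by
  fin_cases v <;> fin_cases w <;>
    rw [Complex.sq_norm, inner4] <;>
    simp [mub4, tens, qbStd, qbX, qbY, cphase2, EuclideanSpace.single_apply,
      ← Complex.ofReal_inv, Complex.normSq_apply] <;>
    ring_nf <;>
    norm_num [hrmul, hrp2, hrp4, hrp8]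


private lemma ub14 (v w : Fin 2 × Fin 2) :
    ‖(inner ℂ (mub4 1 v) (mub4 4 w) : ℂ)‖ ^ 2 = 1 / 4 := by
  fin_cases v <;> fin_cases w <;>
    rw [Complex.sq_norm, inner4] <;>
    simp [mub4, tens, qbStd, qbX, qbY, cphase2, EuclideanSpace.single_apply,
      ← Complex.ofReal_inv, Complex.normSq_apply] <;>
    ring_nf <;>
    norm_num [hrmul, hrp2, hrp4, hrp8]


private lemma ub23 (v w : Fin 2 × Fin 2) :
    ‖(inner ℂ (mub4 2 v) (mub4 3 w) : ℂ)‖ ^ 2 = 1 / 4 := by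
  fin_cases v <;> fin_cases w <;>
    rw [Complex.sq_norm, inner4] <;>
    simp [mub4, tens, qbStd, qbX, qbY, cphase2, EuclideanSpace.single_apply,
      ← Complex.ofReal_inv, Complex.normSq_apply] <;>
    ring_nf <;>
    norm_num [hrmul, hrp2, hrp4, hrp8]


private lemma ub24 (v w : Fin 2 × Fin 2) :
    ‖(inner ℂ (mub4 2 v) (mub4 4 w) : ℂ)‖ ^ 2 = 1 / 4 := by
  fin_cases v <;> fin_cases w <;>
    rw [Complex.sq_norm, inner4] <;>
    simp [mub4, tens, qbStd, qbX, qbY, cphase2, EuclideanSpace.single_apply,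
      ← Complex.ofReal_inv, Complex.normSq_apply] <;>
    ring_nf <;>
    norm_num [hrmul, hrp2, hrp4, hrp8]


private lemma ub34 (v w : Fin 2 × Fin 2) :
    ‖(inner ℂ (mub4 3 v) (mub4 4 w) : ℂ)‖ ^ 2 = 1 / 4 := by
  fin_cases v <;> fin_cases w <;>
    rw [Complex.sq_norm, inner4] <;>
    simp [mub4, tens, qbStd, qbX, qbY, cphase2, EuclideanSpace.single_apply,
      ← Complex.ofReal_inv, Complex.normSq_apply] <;>
    ring_nf <;>
    norm_num [hrmul, hrp2, hrp4, hrp8]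


/-- The five bases `{B₂⊗B₂}`, `{B₀⊗B₀}`, `{B₁⊗B₁}`, `{P₂(u⊗v) : u ∈ B₀, v ∈ B₁}` and
`{P₂(u⊗v) : u ∈ B₁, v ∈ B₀}` are orthonormal bases of `ℂ² ⊗ ℂ²` and are pairwise
mutually unbiased: a complete set of `5` MUBs in dimension `4`. -/
theorem mub4_complete :
    (∀ m : Fin 5, Orthonormal ℂ (mub4 m)) ∧
    (∀ m n : Fin 5, m ≠ n → ∀ v w : Fin 2 × Fin 2,
      ‖(inner ℂ (mub4 m v) (mub4 n w) : ℂ)‖ ^ 2 = 1 / 4) := by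
  constructor
  · intro m
    fin_cases m
    exacts [ortho0, ortho1, ortho2, ortho3, ortho4]
  · intro m n hmn v w
    fin_cases m <;> fin_cases n
    · exact absurd rfl hmn
    · exact ub01 v w
    · exact ub02 v w
    · exact ub03 v w
    · exact ub04 v w
    · { rw [absinner_symm]; exact ub01 w v }
    · exact absurd rfl hmn
    · exact ub12 v w
    · exact ub13 v w
    · exact ub14 v w
    · { rw [absinner_symm]; exact ub02 w v }
    · { rw [absinner_symm]; exact ub12 w v }
    · exact absurd rfl hmn
    · exact ub23 v w
    · exact ub24 v w
    · { rw [absinner_symm]; exact ub03 w v }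
    · { rw [absinner_symm]; exact ub13 w v }
    · { rw [absinner_symm]; exact ub23 w v }
    · exact absurd rfl hmn
    · exact ub34 v w
    · { rw [absinner_symm]; exact ub04 w v }
    · { rw [absinner_symm]; exact ub14 w v }
    · { rw [absinner_symm]; exact ub24 w v }
    · { rw [absinner_symm]; exact ub34 w v }
    · exact absurd rfl hmn
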